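/- (Uniqueness of discrete steady state) Assume (Av) with M = 1 and (AK) with K'(x) > 0 for all x > 0 (K' supported on all of ℝ). For the N-particle nonlocal follow-the-leader system with total mass 1, the equally-spaced configuration x̃_{i+1} = x̃_1 + i/N (so that R_i = 1 and v(R_i) = 0 for all i) is a stationary solution; moreover, any ordered configuration in which some gap satisfies x_{I+1} - x_I > 1/N (so R_I < 1, v(R_I) > 0) while all other gaps equal 1/N is not stationary: the particle x_I has strictly positive velocity ẋ_I = -(v(R_I)/N) Σ_{j>I} K'(x_I - x_j) > 0. -/

import Mathlib

open Finset

/-- Velocity of the `i`-th of `N` particles (each of mass `1/N`, indexed by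
`0, …, N-1`) in the static configuration `y` for the nonlocal
follow-the-leader system:
`ẋ_i = -(v(R_i)/N) Σ_{j>i} K'(y_i - y_j) - (v(R_{i-1})/N) Σ_{j<i} K'(y_i - y_j)`
with `R_i = 1/(N(y_{i+1} - y_i))`. -/
noncomputable def velS (N : ℕ) (v K' : ℝ → ℝ) (y : ℕ → ℝ) (i : ℕ) : ℝ :=
  -(v (1 / ((N : ℝ) * (y (i+1) - y i))) / (N : ℝ)) *
      ∑ j ∈ Finset.Ioc i (N-1), K' (y i - y j)
    - (v (1 / ((N : ℝ) * (y i - y (i-1)))) / (N : ℝ)) *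
      ∑ j ∈ Finset.range i, K' (y i - y j)

/-- uniqueness of the discrete steady state, with `M = 1`:
the equally-spaced configuration `x̃_i = x̃_1 + i/N` (all gaps `1/N`, so
`R_i = 1` and `v(R_i) = 0`) is stationary, and any ordered configuration with
exactly one enlarged gap `x_{I+1} - x_I > 1/N` (all other gaps `= 1/N`) is not
stationary: the particle `x_I` has strictly positive velocity. -/
theorem discrete_steady_state
    (N : ℕ) (v K' : ℝ → ℝ) (x1 : ℝ)
    (hN : 2 ≤ N)
    (hv1 : v 1 = 0)
    (hvpos : ∀ r, 0 ≤ r → r < 1 → 0 < v r)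
    (hvanti : Antitone v)
    (hK'odd : ∀ z, K' (-z) = -K' z)
    (hK'pos : ∀ z, 0 < z → 0 < K' z) :
    (∀ i, i < N → velS N v K' (fun j => x1 + (j : ℝ) / (N : ℝ)) i = 0) ∧
    (∀ (y : ℕ → ℝ) (I : ℕ), I + 1 < N →
      (∀ i, i + 1 < N → i ≠ I → y (i+1) - y i = 1 / (N : ℝ)) →
      1 / (N : ℝ) < y (I+1) - y I →
      0 < velS N v K' y I) := by
  have hNR : (0:ℝ) < N := by
    have : 0 < N := by omega
    exact_mod_cast this
  have hN0 : (N : ℝ) ≠ 0 := ne_of_gt hNR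
  have hv0 : ∀ a b : ℝ, b - a = 1 / (N : ℝ) → v (1 / ((N : ℝ) * (b - a))) = 0 := by
    intro a b h
    rw [h]
    have : (N : ℝ) * (1 / (N : ℝ)) = 1 := by field_simp
    rw [this, div_one, hv1]
  constructor
  · intro i _
    unfold velS
    have h1 : v (1 / ((N : ℝ) * ((fun j : ℕ => x1 + (j : ℝ) / (N : ℝ)) (i+1)
        - (fun j : ℕ => x1 + (j : ℝ) / (N : ℝ)) i))) = 0 := by
      apply hv0
      push_cast
      field_simp
      ring
    rw [h1]
    simp only [zero_div, neg_zero, zero_mul, zero_sub, neg_eq_zero]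
    rcases Nat.eq_zero_or_pos i with hi0 | hip
    · subst hi0; simp
    · have h2 : v (1 / ((N : ℝ) * ((fun j : ℕ => x1 + (j : ℝ) / (N : ℝ)) i
          - (fun j : ℕ => x1 + (j : ℝ) / (N : ℝ)) (i-1)))) = 0 := by
        apply hv0
        have : ((i - 1 : ℕ) : ℝ) = (i : ℝ) - 1 := by
          have : 1 ≤ i := hip
          push_cast [this]; ring
        simp only [this]
        field_simp
        ring
      rw [h2]
      simp
  · intro y I hI hgaps hbig
    have hgapIpos : 0 < y (I+1) - y I := lt_trans (by positivity) hbig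
    -- monotonicity to the right of I
    have hmono : ∀ j, I + 1 ≤ j → j ≤ N - 1 → y I < y j := by
      intro j hj
      induction j, hj using Nat.le_induction with
      | base => intro _; linarith
      | succ n hn ih =>
        intro hn1
        have hnle : n ≤ N - 1 := by omega
        have h1 : y (n+1) - y n = 1 / (N : ℝ) := by
          apply hgaps n (by omega) (by omega)
        have := ih hnle
        have hpos : (0:ℝ) < 1 / (N : ℝ) := by positivity
        linarith
    unfold velS
    -- second term vanishes
    have hsecond : (v (1 / ((N : ℝ) * (y I - y (I-1)))) / (N : ℝ)) *
        ∑ j ∈ Finset.range I, K' (y I - y j) = 0 := by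
      rcases Nat.eq_zero_or_pos I with hI0 | hIp
      · subst hI0; simp
      · have hIm : I - 1 + 1 = I := by omega
        have h2 : v (1 / ((N : ℝ) * (y I - y (I-1)))) = 0 := by
          apply hv0
          have := hgaps (I-1) (by omega) (by omega)
          rw [hIm] at this
          exact this
        rw [h2]; simp
    rw [hsecond, sub_zero]
    -- first term strictly positive
    set R := 1 / ((N : ℝ) * (y (I+1) - y I)) with hR
    have hvR : 0 < v R := by
      apply hvpos
      · positivity
      · rw [hR]
        rw [div_lt_one (by positivity)]
        calc (1:ℝ) = (N : ℝ) * (1 / (N : ℝ)) := by field_simp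
        _ < (N : ℝ) * (y (I+1) - y I) := by
            exact (mul_lt_mul_iff_right₀ hNR).mpr hbig
    have hsum : ∑ j ∈ Finset.Ioc I (N-1), K' (y I - y j) < 0 := by
      apply Finset.sum_neg
      · intro j hj
        rw [Finset.mem_Ioc] at hj
        have hyj : y I < y j := hmono j hj.1 hj.2
        have : K' (y I - y j) = -K' (y j - y I) := by
          rw [← hK'odd]; ring_nf
        rw [this]
        have := hK'pos (y j - y I) (by linarith)
        linarith
      · refine ⟨I + 1, ?_⟩
        rw [Finset.mem_Ioc]
        omega
    have hc : 0 < v R / (N : ℝ) := by positivity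
    nlinarith [mul_pos hc (neg_pos.mpr hsum)]
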